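/- Let F : ℝ × M → M be the complete flow of a vector field X on M, and let k be a positive integer. If o : ℝ/ℤ → M is a non-constant periodic orbit of period p (i.e., o(t) = F(pt, o(0))) whose multiplicity m = p/(least period of o) satisfies m < k, then the loop 𝐨(t) = [ (o(t/k), o(t/k + 1/k), …, o(t/k + (k−1)/k)) ] in M'/(ℤ/k) is well defined (the k points o(t/k + j/k), j = 0,…,k−1, are pairwise distinct) and is a periodic orbit of the induced vector field 𝐗 on M'/(ℤ/k) of period p/k, with multiplicity m. -/

import Mathlib

open Set Filter Topology

/-- The quotient of `M^k` by the cyclic shift `(x₁,…,x_k) ↦ (x₂,…,x_k,x₁)`. -/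
def CycQuot (M : Type*) (k : ℕ) [NeZero k] :=
  Quot (fun a b : Fin k → M => (fun i => a (i + 1)) = b)

/-- The map on the cyclic quotient induced by a coordinatewise application of `F s`. -/
def indFlow {M : Type*} (k : ℕ) [NeZero k] (F : ℝ → M → M) (s : ℝ) :
    CycQuot M k → CycQuot M k :=
  Quot.map (fun x i => F s (x i)) (by intro a b h; subst h; rfl)

lemma indFlow_mk {M : Type*} (k : ℕ) [NeZero k] (F : ℝ → M → M) (s : ℝ) (a : Fin k → M) :
    indFlow k F s (Quot.mk _ a) = Quot.mk _ (fun i => F s (a i)) := rfl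

lemma cycquot_exact {M : Type*} {k : ℕ} [NeZero k] {a b : Fin k → M}
    (h : (Quot.mk (fun a b : Fin k → M => (fun i => a (i + 1)) = b) a)
        = Quot.mk _ b) : ∃ c : Fin k, ∀ i, a (i + c) = b i := by
  have h' := Quot.eqvGen_exact h
  clear h
  induction h' with
  | rel x y hxy => exact ⟨1, fun i => congrFun hxy i⟩
  | refl x => exact ⟨0, fun i => by rw [add_zero]⟩
  | symm x y _ ih =>
      obtain ⟨c, hc⟩ := ih
      refine ⟨-c, fun i => ?_⟩
      have := hc (i + -c)
      rw [neg_add_cancel_right] at this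
      exact this.symm
  | trans x y z _ _ ih1 ih2 =>
      obtain ⟨c1, hc1⟩ := ih1
      obtain ⟨c2, hc2⟩ := ih2
      refine ⟨c1 + c2, fun i => ?_⟩
      rw [add_comm c1 c2, ← add_assoc, hc1, hc2]

/-- Fuller's correspondence: if `o` is a non-constant period-`p` orbit of the flow `F`
(of a vector field `X`), with least period `ℓ`, multiplicity `m = p/ℓ < k`, `k` prime,
then the `k` points `o(t/k + j/k)` are pairwise distinct, and the induced loop
`𝐨(t) = [(o(t/k), …, o(t/k+(k−1)/k))]` in `M^k/(ℤ/k)` is a periodic orbit of the induced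
flow of period `p/k` whose least period is `ℓ/k` (i.e. its multiplicity is again `m`). -/
theorem stmt6 {M : Type*} (k : ℕ) (hk : Nat.Prime k) [NeZero k]
    (F : ℝ → M → M) (hF0 : ∀ x, F 0 x = x) (hFadd : ∀ s t x, F (s + t) x = F s (F t x))
    (o : ℝ → M) (p : ℝ) (hp : 0 < p)
    (ho : ∀ t, o t = F (p * t) (o 0)) (hper : ∀ t, o (t + 1) = o t)
    (hnonconst : ∃ t, o t ≠ o 0)
    (ℓ : ℝ) (hℓpos : 0 < ℓ) (hℓ : F ℓ (o 0) = o 0)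
    (hℓleast : ∀ q : ℝ, 0 < q → F q (o 0) = o 0 → ℓ ≤ q)
    (m : ℕ) (hm : p = m * ℓ) (hmk : m < k) :
    (∀ t : ℝ, Function.Injective (fun j : Fin k => o (t / k + (j : ℝ) / k))) ∧
    (∀ t : ℝ,
      (Quot.mk _ (fun j : Fin k => o ((t + 1) / k + (j : ℝ) / k)) : CycQuot M k) =
        Quot.mk _ (fun j : Fin k => o (t / k + (j : ℝ) / k))) ∧
    (∀ t : ℝ,
      (Quot.mk _ (fun j : Fin k => o (t / k + (j : ℝ) / k)) : CycQuot M k) =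
        indFlow k F (p / k * t) (Quot.mk _ (fun j : Fin k => o ((j : ℝ) / k)))) ∧
    (indFlow k F (ℓ / k) (Quot.mk _ (fun j : Fin k => o ((j : ℝ) / k)) : CycQuot M k) =
        Quot.mk _ (fun j : Fin k => o ((j : ℝ) / k)) ∧
      ∀ q : ℝ, 0 < q →
        indFlow k F q (Quot.mk _ (fun j : Fin k => o ((j : ℝ) / k)) : CycQuot M k) =
          Quot.mk _ (fun j : Fin k => o ((j : ℝ) / k)) → ℓ / k ≤ q) := by
  have hk2 : 2 ≤ k := hk.two_le
  have hk0 : (k : ℝ) ≠ 0 := Nat.cast_ne_zero.mpr (NeZero.ne k)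
  have hkpos : (0:ℝ) < k := by exact_mod_cast Nat.pos_of_ne_zero (NeZero.ne k)
  have hm1 : 1 ≤ m := by
    rcases Nat.eq_zero_or_pos m with h | h
    · exfalso; rw [h] at hm; simp at hm; linarith
    · exact h
  have hm0 : (m : ℝ) ≠ 0 := by positivity
  have hp0 : p ≠ 0 := ne_of_gt hp
  have hℓ0 : ℓ ≠ 0 := ne_of_gt hℓpos
  -- p is a return time
  have horet : F p (o 0) = o 0 := by
    have h1 := ho 1
    rw [mul_one] at h1
    have h2 := hper 0
    rw [zero_add] at h2
    rw [← h1, h2]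
  -- integer multiples of ℓ are return times
  have hretZ : ∀ n : ℤ, F (n * ℓ) (o 0) = o 0 := by
    intro n
    induction n using Int.induction_on with
    | zero => simpa using hF0 (o 0)
    | succ n ih =>
        push_cast at ih ⊢
        rw [show ((n:ℝ)+1)*ℓ = ℓ + (n:ℝ)*ℓ by ring, hFadd, ih, hℓ]
    | pred n ih =>
        push_cast at ih ⊢
        have h2 : F ((-(n:ℝ)-1)*ℓ + ℓ) (o 0) = F ((-(n:ℝ)-1)*ℓ) (F ℓ (o 0)) := hFadd _ _ _
        rw [hℓ, show (-(n:ℝ)-1)*ℓ + ℓ = -(n:ℝ)*ℓ by ring] at h2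
        rw [h2] at ih
        exact ih
  -- characterization of return times
  have hret_char : ∀ s : ℝ, F s (o 0) = o 0 → ∃ n : ℤ, s = n * ℓ := by
    intro s hs
    refine ⟨⌊s / ℓ⌋, ?_⟩
    set n : ℤ := ⌊s / ℓ⌋ with hn
    have hr1 : 0 ≤ s - n * ℓ := by
      have h := (le_div_iff₀ hℓpos).mp (Int.floor_le (s / ℓ))
      linarith
    have hr2 : s - n * ℓ < ℓ := by
      have h := (div_lt_iff₀ hℓpos).mp (Int.lt_floor_add_one (s / ℓ))
      nlinarith
    have hrret : F (s - n * ℓ) (o 0) = o 0 := by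
      rw [show s - n*ℓ = (-n:ℤ)*ℓ + s by push_cast; ring, hFadd, hs]
      exact hretZ (-n)
    rcases hr1.eq_or_lt with h | h
    · linarith
    · have := hℓleast _ h hrret; linarith
  -- o s = o s' if m(s-s') ∈ ℤ
  have hoeq : ∀ s s' : ℝ, (∃ n : ℤ, (m:ℝ) * (s - s') = n) → o s = o s' := by
    rintro s s' ⟨n, hn⟩
    rw [ho s, ho s']
    have h1 : p * s = p * s' + n * ℓ := by
      rw [hm]; linear_combination ℓ * hn
    rw [h1, hFadd, hretZ n]
  -- converse
  have hoeq' : ∀ s s' : ℝ, o s = o s' → ∃ n : ℤ, (m:ℝ) * (s - s') = n := by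
    intro s s' hss
    rw [ho s, ho s'] at hss
    have h1 : F (p * (s - s')) (o 0) = o 0 := by
      have h2 : F (-(p*s') + p*s) (o 0) = F (-(p*s')) (F (p*s) (o 0)) := hFadd _ _ _
      rw [hss, ← hFadd, neg_add_cancel, hF0] at h2
      rw [show p*(s-s') = -(p*s') + p*s by ring]
      exact h2
    obtain ⟨n, hn⟩ := hret_char _ h1
    refine ⟨n, ?_⟩
    rw [hm] at hn
    have h3 : ((m:ℝ)*(s-s'))*ℓ = (n:ℝ)*ℓ := by linear_combination hn
    exact mul_right_cancel₀ hℓ0 h3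
  -- k does not divide m
  have hknm : ¬ (k ∣ m) := fun hd => absurd (Nat.le_of_dvd (by omega) hd) (by omega)
  -- Part 1: injectivity
  have part1 : ∀ t : ℝ, Function.Injective (fun j : Fin k => o (t / k + (j : ℝ) / k)) := by
    intro t i j hij
    simp only at hij
    obtain ⟨n, hn⟩ := hoeq' _ _ hij
    have hn' : ((m:ℝ)*((i:ℝ)-(j:ℝ)))/k = n := by rw [← hn]; ring
    have hcast : (m:ℝ) * ((i:ℝ) - (j:ℝ)) = n * k := (div_eq_iff hk0).mp hn'
    have hZ : (m:ℤ) * ((i:ℤ) - (j:ℤ)) = n * k := by exact_mod_cast hcast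
    have hdvd : (k:ℤ) ∣ (m:ℤ) * ((i:ℤ) - (j:ℤ)) := ⟨n, by linarith⟩
    have hkp : Prime (k:ℤ) := Nat.prime_iff_prime_int.mp hk
    rcases hkp.dvd_mul.mp hdvd with h | h
    · exact absurd (Int.natCast_dvd_natCast.mp h) hknm
    · have h0 : ((i:ℤ) - (j:ℤ)) = 0 := by
        refine Int.eq_zero_of_dvd_of_natAbs_lt_natAbs h ?_
        have hi := i.isLt; have hj := j.isLt
        simp only [Int.natAbs_natCast]
        omega
      have h1 : (i:ℤ) = (j:ℤ) := by linarith
      exact Fin.ext (by exact_mod_cast h1)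
  -- basic shift lemma
  have hA : ∀ s : ℝ,
      (Quot.mk _ (fun j : Fin k => o (s + ((j:ℝ)+1) / k)) : CycQuot M k) =
        Quot.mk _ (fun j : Fin k => o (s + (j:ℝ) / k)) := by
    intro s
    have hrel : (fun i : Fin k => (fun j : Fin k => o (s + (j:ℝ)/k)) (i + 1))
        = fun j : Fin k => o (s + ((j:ℝ)+1)/k) := by
      funext i
      simp only
      apply hoeq
      have hv : ((i + 1 : Fin k) : ℕ) = ((i:ℕ) + 1) % k := by
        rw [Fin.add_def]
        simp [Nat.one_mod_eq_one.mpr (by omega : k ≠ 1)]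
      set d : ℕ := ((i:ℕ) + 1) / k with hd
      have hmod : ((((i:ℕ) + 1) % k : ℕ) : ℝ) = (((i:ℕ):ℝ) + 1) - k * d := by
        have h := Nat.mod_add_div ((i:ℕ)+1) k
        rw [← hd] at h
        have h' : ((i:ℕ)+1) % k = (i:ℕ) + 1 - k * d := by omega
        have hle : k * d ≤ (i:ℕ) + 1 := by omega
        rw [h']
        push_cast [hle]
        ring
      refine ⟨-(m * d : ℤ), ?_⟩
      rw [hv, hmod]
      push_cast
      field_simp
      ring
    exact (Quot.sound (r := fun a b : Fin k → M => (fun i => a (i + 1)) = b) hrel).symm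
  -- iterated shift
  have hB : ∀ (s : ℝ) (c : ℕ),
      (Quot.mk _ (fun j : Fin k => o (s + ((j:ℝ)+c) / k)) : CycQuot M k) =
        Quot.mk _ (fun j : Fin k => o (s + (j:ℝ) / k)) := by
    intro s c
    induction c with
    | zero => congr 1; funext j; norm_num
    | succ c ih =>
        have e1 : (fun j : Fin k => o (s + ((j:ℝ)+(c+1:ℕ)) / k))
            = fun j : Fin k => o ((s + (c:ℝ)/k) + ((j:ℝ)+1) / k) := by
          funext j; congr 1; push_cast; ring
        have e2 : (fun j : Fin k => o ((s + (c:ℝ)/k) + (j:ℝ) / k))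
            = fun j : Fin k => o (s + ((j:ℝ)+c) / k) := by
          funext j; congr 1; push_cast; ring
        rw [e1, hA (s + (c:ℝ)/k), e2, ih]
  refine ⟨part1, ?_, ?_, ?_, ?_⟩
  · -- Part 2
    intro t
    have e1 : (fun j : Fin k => o ((t+1) / k + (j:ℝ)/k))
        = fun j : Fin k => o (t/k + ((j:ℝ)+1) / k) := by
      funext j; congr 1; field_simp; ring
    rw [e1]; exact hA (t/k)
  · -- Part 3
    intro t
    rw [indFlow_mk]
    congr 1
    funext j
    rw [ho ((j:ℝ)/k), ← hFadd, ho (t/k + (j:ℝ)/k)]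
    congr 1
    field_simp
  · -- Part 4a
    haveI : Fact k.Prime := ⟨hk⟩
    have hmz : (m : ZMod k) ≠ 0 := by
      rw [Ne, ZMod.natCast_eq_zero_iff]
      exact hknm
    set c : ℕ := ((m : ZMod k)⁻¹).val with hc
    have hmc : ((m * c : ℕ) : ZMod k) = ((1:ℕ) : ZMod k) := by
      push_cast
      rw [hc, ZMod.natCast_val, ZMod.cast_id]
      exact mul_inv_cancel₀ hmz
    have hmodeq : (m * c) % k = 1 % k := (ZMod.natCast_eq_natCast_iff _ _ _).mp hmc
    have h1k : 1 % k = 1 := Nat.one_mod_eq_one.mpr (by omega : k ≠ 1)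
    rw [h1k] at hmodeq
    set d : ℕ := (m * c) / k with hd
    have hmcd : m * c = k * d + 1 := by
      have h := Nat.mod_add_div (m*c) k
      rw [← hd, hmodeq] at h
      omega
    rw [indFlow_mk]
    have e1 : (fun j : Fin k => F (ℓ / k) (o ((j:ℝ)/k)))
        = fun j : Fin k => o ((0:ℝ) + ((j:ℝ)+c) / k) := by
      funext j
      have h1 : F (ℓ/k) (o ((j:ℝ)/k)) = o ((j:ℝ)/k + 1/((m:ℝ)*k)) := by
        rw [ho ((j:ℝ)/k), ← hFadd, ho ((j:ℝ)/k + 1/((m:ℝ)*k))]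
        congr 1
        rw [hm]; field_simp; ring
      rw [h1]
      apply hoeq
      refine ⟨-(d:ℤ), ?_⟩
      have hc' : (m:ℝ) * c = k * d + 1 := by exact_mod_cast hmcd
      have e : (m:ℝ)*((j:ℝ)/k + 1/((m:ℝ)*k) - (0 + ((j:ℝ)+c)/k)) = (1 - (m:ℝ)*c)/k := by
        field_simp
        ring
      push_cast
      rw [e, hc']
      field_simp
      ring
    rw [e1, hB 0 c]
    congr 1; funext j; rw [zero_add]
  · -- Part 4b
    intro q hq hfix
    rw [indFlow_mk] at hfix
    obtain ⟨c, hc⟩ := cycquot_exact hfix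
    have h0 := hc 0
    rw [zero_add] at h0
    have h1 : o ((c:ℝ)/k + q/p) = o (((0:Fin k):ℝ)/k) := by
      rw [← h0]
      rw [ho ((c:ℝ)/k), ← hFadd, ho ((c:ℝ)/k + q/p)]
      congr 1
      field_simp; ring
    have h1' : o ((c:ℝ)/k + q/p) = o 0 := by
      rw [h1]; norm_num
    obtain ⟨n, hn⟩ := hoeq' _ _ h1'
    rw [hm] at hn
    have e : (m:ℝ)*((c:ℝ)/k + q/((m:ℝ)*ℓ) - 0) = ((m:ℝ)*c*ℓ + q*k)/(k*ℓ) := by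
      field_simp; ring
    rw [e] at hn
    have h2 : (m:ℝ)*c*ℓ + q*k = n*(k*ℓ) :=
      (div_eq_iff (by positivity : (k:ℝ)*ℓ ≠ 0)).mp hn
    have hqk : q * k = ((n * k - m * c : ℤ) : ℝ) * ℓ := by
      push_cast
      linear_combination h2
    have hD : (1:ℝ) ≤ ((n * k - m * c : ℤ) : ℝ) := by
      have hpos : (0:ℝ) < ((n * k - m * c : ℤ) : ℝ) := by nlinarith
      have hz : (0:ℤ) < n * k - m * c := by exact_mod_cast hpos
      exact_mod_cast hz
    rw [div_le_iff₀ hkpos]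
    nlinarith
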